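/- There exists a constant c such that for every m larger than c there exists a (simple, undirected) graph G on m vertices satisfying: (1) every vertex of G has degree at most m^(1/4.9); and (2) for every two disjoint subsets U_1, U_2 of the vertex set with |U_1| ≥ m^0.999/2 and |U_2| ≥ m^0.999/2 there exists an edge of G with one end in U_1 and the other in U_2. -/

import Mathlib

open scoped Classical

namespace NBPPaper

/-! ### Literals and assignments.
A literal is a pair `(x, b)` of a variable and a polarity (`true` = positive literal).
A set of literals is a `Finset (Var × Bool)`. -/

/-- A set of literals is consistent: no variable occurs both positively and negatively. -/
def Consistent {Var : Type} (S : Finset (Var × Bool)) : Prop :=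
  ∀ x : Var, ¬((x, true) ∈ S ∧ (x, false) ∈ S)

/-- `S` is a set of literals over the variable set `W`. -/
def LitsOver {Var : Type} (W : Finset Var) (S : Finset (Var × Bool)) : Prop :=
  Consistent S ∧ ∀ l ∈ S, l.1 ∈ W

/-- `S` is an assignment of exactly the variables of `W`:
it contains exactly one literal of each variable of `W` and nothing else. -/
def AssignsExactly {Var : Type} (W : Finset Var) (S : Finset (Var × Bool)) : Prop :=
  (∀ l ∈ S, l.1 ∈ W) ∧ ∀ x ∈ W, ∃! b : Bool, (x, b) ∈ S

/-- Satisfaction of a CNF, given as a set of clauses (each clause a set of literals):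
every clause contains a literal of `S`. -/
def SatCNF {V : Type} (φ : Set (Finset (V × Bool))) (S : Finset (V × Bool)) : Prop :=
  ∀ C ∈ φ, ∃ l ∈ C, l ∈ S

/-! ### Nondeterministic branching programs -/

/-- An edge of a nondeterministic branching program over variable type `Var`
with vertex set `Fin n`.  `lab = none` means the edge is unlabelled; the field
`id` allows parallel edges (multigraph). -/
structure NBPEdge (Var : Type) (n : ℕ) where
  src : Fin n
  dst : Fin n
  lab : Option (Var × Bool)
  id : ℕ
deriving DecidableEq

/-- A nondeterministic branching program: a finite DAG (the vertices `Fin n` are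
listed in a topological order, i.e. every edge increases the index) with a single
source (the only vertex with no incoming edge) and a single sink (the only vertex
with no outgoing edge). -/
structure NBP (Var : Type) where
  n : ℕ
  edges : Finset (NBPEdge Var n)
  source : Fin n
  sink : Fin n
  acyc : ∀ e ∈ edges, e.src < e.dst
  source_no_in : ∀ e ∈ edges, e.dst ≠ source
  sink_no_out : ∀ e ∈ edges, e.src ≠ sink
  only_source : ∀ v : Fin n, v ≠ source → ∃ e ∈ edges, e.dst = v
  only_sink : ∀ v : Fin n, v ≠ sink → ∃ e ∈ edges, e.src = v

variable {Var : Type}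

/-- The set of literals labelling the edges of a path (a list of edges). -/
def pathLits [DecidableEq Var] {n : ℕ} (p : List (NBPEdge Var n)) : Finset (Var × Bool) :=
  (p.filterMap NBPEdge.lab).toFinset

/-- The set of variables occurring (as edge labels) on a path. -/
def pathVars [DecidableEq Var] {n : ℕ} (p : List (NBPEdge Var n)) : Finset Var :=
  ((p.filterMap NBPEdge.lab).map Prod.fst).toFinset

/-- The set of vertices visited by a path. -/
def pathVertices {n : ℕ} (p : List (NBPEdge Var n)) : Finset (Fin n) :=
  (p.map NBPEdge.src).toFinset ∪ (p.map NBPEdge.dst).toFinset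

/-- The number of occurrences of the variable `x` as an edge label on the path `p`. -/
def occCount [DecidableEq Var] {n : ℕ} (x : Var) (p : List (NBPEdge Var n)) : ℕ :=
  (p.filterMap NBPEdge.lab).countP (fun l => decide (l.1 = x))

namespace NBP

/-- `p` is a directed path of `Z` from vertex `u` to vertex `v`. -/
def IsPathFrom (Z : NBP Var) (u v : Fin Z.n) (p : List (NBPEdge Var Z.n)) : Prop :=
  p ≠ [] ∧ (∀ e ∈ p, e ∈ Z.edges) ∧ List.Chain' (fun e f => e.dst = f.src) p ∧
    p.head?.map NBPEdge.src = some u ∧ p.getLast?.map NBPEdge.dst = some v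

/-- `p` is a source-sink path of `Z`. -/
def IsSourceSink (Z : NBP Var) (p : List (NBPEdge Var Z.n)) : Prop :=
  Z.IsPathFrom Z.source Z.sink p

/-- A computational path: a source-sink path carrying no two opposite literals. -/
def IsCompPath [DecidableEq Var] (Z : NBP Var) (p : List (NBPEdge Var Z.n)) : Prop :=
  Z.IsSourceSink p ∧ Consistent (pathLits p)

/-- The set `Vars(Z)` of variables whose literals occur on edges of `Z`. -/
def vars [DecidableEq Var] (Z : NBP Var) : Finset Var :=
  Z.edges.biUnion (fun e => (e.lab.map Prod.fst).toFinset)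

/-- `Z` is a (syntactic) read-`d`-times NBP. -/
def ReadTimes [DecidableEq Var] (Z : NBP Var) (d : ℕ) : Prop :=
  ∀ p, Z.IsSourceSink p → ∀ x : Var, occCount x p ≤ d

/-- `Z` is a uniform read-`d`-times NBP: every variable of `Z` occurs exactly `d`
times on every source-sink path. -/
def UniformReadTimes [DecidableEq Var] (Z : NBP Var) (d : ℕ) : Prop :=
  Z.ReadTimes d ∧ ∀ p, Z.IsSourceSink p → ∀ x ∈ Z.vars, occCount x p = d

/-- `Z` computes the Boolean function with variable set `W` whose satisfying
(total) assignments are described by the predicate `F`. -/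
def Computes [DecidableEq Var] (Z : NBP Var) (W : Finset Var)
    (F : Finset (Var × Bool) → Prop) : Prop :=
  Z.vars = W ∧ ∀ S, AssignsExactly W S → (F S ↔ ∃ p, Z.IsCompPath p ∧ pathLits p ⊆ S)

end NBP

/-- `parts` is the partition of the path `p` generated by the vertex set `X`:
`p` is cut into `|X| + 1` consecutive nonempty subpaths whose cut points are
exactly the vertices of `X`. -/
def GeneratesPartition {n : ℕ} (X : Finset (Fin n)) (p : List (NBPEdge Var n))
    (parts : List (List (NBPEdge Var n))) : Prop :=
  p = parts.flatten ∧ parts.length = X.card + 1 ∧ (∀ q ∈ parts, q ≠ []) ∧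
    (parts.dropLast.filterMap (fun q => q.getLast?.map NBPEdge.dst)).toFinset = X

/-- Variables of `Y₁` occur only on parts with even (0-based) index, i.e. odd-numbered
subpaths, and variables of `Y₂` only on parts with odd (0-based) index. -/
def OddEvenSplit [DecidableEq Var] {n : ℕ} (parts : List (List (NBPEdge Var n)))
    (Y₁ Y₂ : Finset Var) : Prop :=
  ∀ k : ℕ, ∀ x ∈ pathVars (parts.getD k []),
    (x ∈ Y₁ → k % 2 = 0) ∧ (x ∈ Y₂ → k % 2 = 1)

/-- The set `X` of vertices of `Z` (containing neither source nor sink) separates the two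
disjoint subsets `Y₁, Y₂` of `Vars(Z)`. -/
def NBP.Separates [DecidableEq Var] (Z : NBP Var) (X : Finset (Fin Z.n))
    (Y₁ Y₂ : Finset Var) : Prop :=
  Disjoint Y₁ Y₂ ∧ Y₁ ⊆ Z.vars ∧ Y₂ ⊆ Z.vars ∧ Z.source ∉ X ∧ Z.sink ∉ X ∧
  ∃ p parts, Z.IsCompPath p ∧ GeneratesPartition X p parts ∧
    (OddEvenSplit parts Y₁ Y₂ ∨ OddEvenSplit parts Y₂ Y₁)

/-! ### Rooted trees -/

/-- A finite rooted tree on (a subset of) the vertex type `V`, given by a parent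
function together with a depth function certifying acyclicity. -/
structure RootedTree (V : Type) [DecidableEq V] where
  verts : Finset V
  root : V
  parent : V → V
  depth : V → ℕ
  root_mem : root ∈ verts
  parent_mem : ∀ v ∈ verts, v ≠ root → parent v ∈ verts
  depth_root : depth root = 0
  depth_parent : ∀ v ∈ verts, v ≠ root → depth v = depth (parent v) + 1

namespace RootedTree

variable {V : Type} [DecidableEq V]

/-- The children of a vertex. -/
def children (T : RootedTree V) (u : V) : Finset V :=
  T.verts.filter (fun v => v ≠ T.root ∧ T.parent v = u)

/-- The leaves of the tree: vertices with no children. -/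
def leaves (T : RootedTree V) : Finset V :=
  T.verts.filter (fun v => T.children v = ∅)

/-- The vertex set of the path from the root to `v` (i.e. `v` and all its ancestors). -/
def pathVerts (T : RootedTree V) (v : V) : Finset V :=
  (Finset.range (T.depth v + 1)).image (fun k => T.parent^[k] v)

/-- The height of the tree: the largest number of vertices on a root-leaf path. -/
def height (T : RootedTree V) : ℕ :=
  (T.verts.sup T.depth) + 1

/-- Every vertex has at most two children. -/
def IsBinary (T : RootedTree V) : Prop :=
  ∀ u ∈ T.verts, (T.children u).card ≤ 2

/-- The tree is extended: none of its leaves has a sibling. -/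
def IsExtended (T : RootedTree V) : Prop :=
  ∀ v ∈ T.verts, v ≠ T.root → T.children v = ∅ → T.children (T.parent v) = {v}

/-- The edge set of the tree (as unordered pairs). -/
def edgeSet (T : RootedTree V) : Finset (Sym2 V) :=
  (T.verts.filter (fun v => v ≠ T.root)).image (fun v => s(v, T.parent v))

end RootedTree

/-! ### Binary-tree-based graphs and pseudoexpanders -/

/-- A binary-tree-based (BTB) graph on the vertex type `V`: an edge-disjoint union of
`m` extended binary rooted trees such that every leaf of one of the trees is a leaf of
exactly two of the trees, any two trees have at most one vertex in common (that vertex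
being a leaf of both), and the roots are pairwise distinct. -/
structure BTB (V : Type) [DecidableEq V] [Fintype V] where
  m : ℕ
  tree : Fin m → RootedTree V
  binary : ∀ i, (tree i).IsBinary
  extended : ∀ i, (tree i).IsExtended
  cover : ∀ v : V, ∃ i, v ∈ (tree i).verts
  edge_disjoint : ∀ i j, i ≠ j → Disjoint ((tree i).edgeSet) ((tree j).edgeSet)
  leaf_two : ∀ i, ∀ v ∈ (tree i).leaves,
    (Finset.univ.filter (fun j => v ∈ (tree j).leaves)).card = 2
  common_le_one : ∀ i j, i ≠ j → ∀ u v,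
    u ∈ (tree i).verts → u ∈ (tree j).verts →
    v ∈ (tree i).verts → v ∈ (tree j).verts → u = v
  common_leaf : ∀ i j, i ≠ j → ∀ v, v ∈ (tree i).verts → v ∈ (tree j).verts →
    v ∈ (tree i).leaves ∧ v ∈ (tree j).leaves
  roots_inj : Function.Injective (fun i => (tree i).root)

namespace BTB

variable {V : Type} [DecidableEq V] [Fintype V]

/-- `ℓ` is the common leaf of the (adjacent) trees `T_i` and `T_j`. -/
def IsCommonLeaf (H : BTB V) (i j : Fin H.m) (ℓ : V) : Prop :=
  i ≠ j ∧ ℓ ∈ (H.tree i).leaves ∧ ℓ ∈ (H.tree j).leaves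

/-- The trees `T_i` and `T_j` are adjacent (share a common leaf); equivalently,
`{t_i, t_j}` is a pseudoedge of `H`. -/
def Adjacent (H : BTB V) (i j : Fin H.m) : Prop :=
  ∃ ℓ, H.IsCommonLeaf i j ℓ

/-- The pseudodegree of the root `t_i`: the number of pseudoedges containing it. -/
noncomputable def pseudodegree (H : BTB V) (i : Fin H.m) : ℕ :=
  (Finset.univ.filter (fun j => H.Adjacent i j)).card

/-- The set of root vertices of `H`. -/
def rootSet (H : BTB V) : Finset V :=
  Finset.univ.image (fun i => (H.tree i).root)

/-- A pseudomatching: a set of pseudoedges (recorded as ordered pairs of root indices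
with `i < j`) no two of which share an end. -/
def IsPseudomatching (H : BTB V) (M : Finset (Fin H.m × Fin H.m)) : Prop :=
  (∀ e ∈ M, e.1 < e.2 ∧ H.Adjacent e.1 e.2) ∧
  ∀ e ∈ M, ∀ f ∈ M, e ≠ f → e.1 ≠ f.1 ∧ e.1 ≠ f.2 ∧ e.2 ≠ f.1 ∧ e.2 ≠ f.2

/-- A pseudomatching between the disjoint sets `U` and `W` of roots (given by their
indices): every pseudoedge of `M` has one end in `U` and the other in `W`. -/
def IsPseudomatchingBetween (H : BTB V) (M : Finset (Fin H.m × Fin H.m))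
    (U W : Finset (Fin H.m)) : Prop :=
  H.IsPseudomatching M ∧ ∀ e ∈ M, (e.1 ∈ U ∧ e.2 ∈ W) ∨ (e.1 ∈ W ∧ e.2 ∈ U)

/-- The set `⋃M` of root vertices matched by the pseudomatching `M`. -/
def matchingRoots (H : BTB V) (M : Finset (Fin H.m × Fin H.m)) : Finset V :=
  M.biUnion (fun e => {(H.tree e.1).root, (H.tree e.2).root})

/-- The vertex set `V(P_{i,j})` of the path connecting the roots `t_i` and `t_j`
through their common leaf `ℓ`. -/
def clauseVerts (H : BTB V) (i j : Fin H.m) (ℓ : V) : Finset V :=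
  (H.tree i).pathVerts ℓ ∪ (H.tree j).pathVerts ℓ

/-- `S` satisfies the monotone CNF `φ_H`. -/
def SatisfiesPhi (H : BTB V) (S : Finset (V × Bool)) : Prop :=
  ∀ i j ℓ, H.IsCommonLeaf i j ℓ → ∃ v ∈ H.clauseVerts i j ℓ, (v, true) ∈ S

/-- `S` falsifies no clause of `φ_H`. -/
def FalsifiesNoClause (H : BTB V) (S : Finset (V × Bool)) : Prop :=
  ∀ i j ℓ, H.IsCommonLeaf i j ℓ → ¬(∀ v ∈ H.clauseVerts i j ℓ, (v, false) ∈ S)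

/-- `H` is a pseudoexpander. -/
def IsPseudoexpander (H : BTB V) : Prop :=
  (∀ i, ((H.tree i).height : ℝ) ≤ Real.logb 2 H.m / 4.9 + 3) ∧
  ∀ U W : Finset (Fin H.m), Disjoint U W →
    (H.m : ℝ) ^ (0.999 : ℝ) ≤ U.card → (H.m : ℝ) ^ (0.999 : ℝ) ≤ W.card →
    ∃ M, H.IsPseudomatchingBetween M U W ∧ (H.m : ℝ) ^ (0.999 : ℝ) / 3 ≤ M.card

/-! #### The probability space on the satisfying assignments of `φ_H` -/

/-- The set `SAT(H)` of satisfying assignments of `φ_H` (total assignments of the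
variables `V(H)` satisfying every clause). -/
noncomputable def SATH (H : BTB V) : Finset (Finset (V × Bool)) :=
  Finset.univ.filter (fun S => AssignsExactly Finset.univ S ∧ H.SatisfiesPhi S)

/-- `Fix(S)`: the set of leaf variables `ℓ_{i,j}` occurring positively in `S` such that
all the other variables of the clause `C_{i,j}` occur negatively in `S`. -/
def Fix (H : BTB V) (S : Finset (V × Bool)) : Set V :=
  {ℓ | ∃ i j, H.IsCommonLeaf i j ℓ ∧ (ℓ, true) ∈ S ∧
      ∀ v ∈ H.clauseVerts i j ℓ, v ≠ ℓ → (v, false) ∈ S}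

/-- The probability weight of `S`: `(1/2) ^ |V(H) \ Fix(S)|`. -/
noncomputable def weight (H : BTB V) (S : Finset (V × Bool)) : ℝ :=
  (1 / 2 : ℝ) ^ (Fintype.card V - (H.Fix S).ncard)

/-- The probability of the event `E` in the probability space on `SAT(H)`. -/
noncomputable def Pr (H : BTB V) (E : Finset (V × Bool) → Prop) : ℝ :=
  ∑ S ∈ H.SATH.filter E, H.weight S

/-- `|S \ Fix(S)|`: the number of literals of `S` that are not fixed. -/
noncomputable def nonFixedCount (H : BTB V) (S : Finset (V × Bool)) : ℕ :=
  (S.filter (fun l => ¬(l.2 = true ∧ l.1 ∈ H.Fix S))).card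

/-- `v` and `w` are siblings (in one of the trees of `H`). -/
def Sibling (H : BTB V) (v w : V) : Prop :=
  ∃ k, v ∈ (H.tree k).verts ∧ w ∈ (H.tree k).verts ∧
    v ≠ (H.tree k).root ∧ w ≠ (H.tree k).root ∧ v ≠ w ∧
    (H.tree k).parent v = (H.tree k).parent w

/-- `S` respects the pseudoedge `{t_i, t_j}`: all non-root variables of `C_{i,j}` occur
negatively in `S` and the siblings of all internal variables of `C_{i,j}` occur
positively in `S`. -/
def Respects (H : BTB V) (i j : Fin H.m) (S : Finset (V × Bool)) : Prop :=
  ∃ ℓ, H.IsCommonLeaf i j ℓ ∧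
    (∀ v ∈ H.clauseVerts i j ℓ,
      v ≠ (H.tree i).root → v ≠ (H.tree j).root → (v, false) ∈ S) ∧
    (∀ v ∈ H.clauseVerts i j ℓ,
      v ≠ (H.tree i).root → v ≠ (H.tree j).root → v ≠ ℓ →
      ∀ w, H.Sibling v w → (w, true) ∈ S)

/-- `S` is `η`-comfortable w.r.t. the pseudomatching `M`: `S` falsifies no clause of
`φ_H` and respects at least `η·|M|` pseudoedges of `M`. -/
noncomputable def Comfortable (H : BTB V) (M : Finset (Fin H.m × Fin H.m)) (η : ℝ)
    (S : Finset (V × Bool)) : Prop :=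
  H.FalsifiesNoClause S ∧
    η * M.card ≤ ((M.filter (fun e => H.Respects e.1 e.2 S)).card : ℝ)

/-- `S` is a guarded set of literals. -/
def Guarded (H : BTB V) (S : Finset (V × Bool)) : Prop :=
  Consistent S ∧ ∀ i j ℓ, H.IsCommonLeaf i j ℓ →
    ((ℓ, true) ∉ S ∧ (ℓ, false) ∉ S) ∨
    (∃ v ∈ H.clauseVerts i j ℓ, v ≠ ℓ ∧ (v, true) ∈ S) ∨
    ((ℓ, true) ∈ S ∧ ∀ v ∈ H.clauseVerts i j ℓ, v ≠ ℓ → (v, false) ∈ S)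

/-! #### Matching CNFs and matching OR-CNFs -/

/-- The 'half clause' `C^{1/2}_{i,j}`: the positive clause on the vertices of the path
from `t_i` (if `side = true`) or from `t_j` (if `side = false`) to the common leaf `ℓ`. -/
def halfClause (H : BTB V) (i j : Fin H.m) (ℓ : V) (side : Bool) : Finset (V × Bool) :=
  (if side then (H.tree i).pathVerts ℓ else (H.tree j).pathVerts ℓ).image (fun v => (v, true))

/-- The matching CNF w.r.t. `M` determined by the side choice `c`: one half clause per
pseudoedge of `M`.  The formulas of `CNF(M)` are exactly the CNFs `matchingCNF H M c`. -/
def matchingCNF (H : BTB V) (M : Finset (Fin H.m × Fin H.m))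
    (c : Fin H.m × Fin H.m → Bool) : Set (Finset (V × Bool)) :=
  {C | ∃ e ∈ M, ∃ ℓ, H.IsCommonLeaf e.1 e.2 ℓ ∧ C = H.halfClause e.1 e.2 ℓ (c e)}

/-- A matching OR-CNF w.r.t. `M` is determined by a map `Ψ` assigning to each assignment
`S₀` of the variables `V(H) \ ⋃M` a matching CNF (given by its side choice `Ψ S₀`);
the formula is `⋁_{S₀} (Conj(S₀) ∧ matchingCNF H M (Ψ S₀))`.  `S` satisfies it iff for
(the) `S₀ ⊆ S`, `S` satisfies the corresponding matching CNF. -/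
def SatORCNF (H : BTB V) (M : Finset (Fin H.m × Fin H.m))
    (Ψ : Finset (V × Bool) → (Fin H.m × Fin H.m) → Bool) (S : Finset (V × Bool)) : Prop :=
  ∃ S₀, AssignsExactly (Finset.univ \ H.matchingRoots M) S₀ ∧ S₀ ⊆ S ∧
    SatCNF (H.matchingCNF M (Ψ S₀)) S

/-- `X` is an `(a, b)`-determining set for the NBP `Z` computing `φ_H`. -/
def IsDeterminingSet (H : BTB V) (Z : NBP V) (a b : ℝ) (X : Finset (Fin Z.n)) : Prop :=
  (X.card : ℝ) ≤ a ∧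
  ∃ M : Finset (Fin H.m × Fin H.m), H.IsPseudomatching M ∧ b ≤ (M.card : ℝ) ∧
    ∃ Ψ : Finset (V × Bool) → (Fin H.m × Fin H.m) → Bool,
      ∀ p, Z.IsCompPath p → X ⊆ pathVertices p → H.SatORCNF M Ψ (pathLits p)

end BTB



section Statement13Aux

open Finset
open scoped Nat

private lemma aux_pow_le_factorial_mul_exp (x : ℝ) (hx : 0 ≤ x) (n : ℕ) :
    x ^ n ≤ (n ! : ℝ) * Real.exp x := by
  have h := Real.sum_le_exp_of_nonneg hx (n + 1)
  have h2 : x ^ n / (n ! : ℝ) ≤ ∑ i ∈ Finset.range (n + 1), x ^ i / (i ! : ℝ) :=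
    Finset.single_le_sum (f := fun i => x ^ i / (i ! : ℝ))
      (fun i _ => by positivity) (Finset.self_mem_range_succ n)
  have h3 := h2.trans h
  rw [div_le_iff₀ (by positivity)] at h3
  nlinarith [h3]

private lemma aux_choose_le_two_pow (n k : ℕ) : n.choose k ≤ 2 ^ n := by
  by_cases h : k ≤ n
  · calc n.choose k ≤ ∑ i ∈ Finset.range (n + 1), n.choose i :=
        Finset.single_le_sum (fun i _ => Nat.zero_le _) (by simp [Nat.lt_succ_of_le h])
      _ = 2 ^ n := Nat.sum_range_choose n
  · simp [Nat.choose_eq_zero_of_lt (lt_of_not_ge h)]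

private lemma aux_factA {m k D : ℕ} (hm : 1 ≤ m) (hk : 1 ≤ k) (h6k : 6 * k ≤ D)
    (h4m : 4 * m ≤ 2 ^ D) : 2 * m * Nat.choose (m * k) D < m ^ D := by
  have hD1 : 1 ≤ D := by omega
  have hm0 : (0:ℝ) < m := by exact_mod_cast hm
  have hk0 : (0:ℝ) < k := by exact_mod_cast hk
  have hD0 : (0:ℝ) < D := by exact_mod_cast hD1
  set C : ℝ := ((m * k).choose D : ℝ) with hCdef
  have hCnn : 0 ≤ C := Nat.cast_nonneg _
  have hC : C * (D ! : ℝ) ≤ ((m : ℝ) * k) ^ D := by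
    have h := Nat.choose_le_pow_div (α := ℝ) D (m * k)
    rw [le_div_iff₀ (by positivity)] at h
    calc C * (D ! : ℝ) ≤ ((m * k : ℕ) : ℝ) ^ D := h
      _ = ((m : ℝ) * k) ^ D := by push_cast; ring
  have hfac : ((D : ℝ)) ^ D ≤ (D ! : ℝ) * Real.exp D :=
    aux_pow_le_factorial_mul_exp _ (Nat.cast_nonneg _) D
  have hexp3 : Real.exp (D : ℝ) ≤ 3 ^ D := by
    have h1 : Real.exp (D : ℝ) = Real.exp 1 ^ D := by
      simpa using (Real.exp_nat_mul 1 D)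
    rw [h1]
    exact pow_le_pow_left₀ (Real.exp_pos 1).le
      (by have := Real.exp_one_lt_d9; linarith) D
  have key1 : C * (D : ℝ) ^ D ≤ (3 * ((m : ℝ) * k)) ^ D := by
    calc C * (D : ℝ) ^ D ≤ C * ((D ! : ℝ) * Real.exp D) :=
          mul_le_mul_of_nonneg_left hfac hCnn
      _ = (C * (D ! : ℝ)) * Real.exp D := by ring
      _ ≤ ((m : ℝ) * k) ^ D * 3 ^ D :=
          mul_le_mul hC hexp3 (Real.exp_pos _).le (by positivity)
      _ = (3 * ((m : ℝ) * k)) ^ D := by rw [mul_pow]; ring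
  have hlin : 3 * ((m : ℝ) * k) ≤ (m : ℝ) * D / 2 := by
    have h6 : (6 : ℝ) * k ≤ D := by exact_mod_cast h6k
    nlinarith [hm0.le]
  have key2 : (3 * ((m : ℝ) * k)) ^ D ≤ ((m : ℝ) * D / 2) ^ D :=
    pow_le_pow_left₀ (by positivity) hlin D
  have key3 : C * ((D : ℝ) ^ D * 2 ^ D) ≤ (m : ℝ) ^ D * (D : ℝ) ^ D := by
    have h := key1.trans key2
    have : ((m : ℝ) * D / 2) ^ D * 2 ^ D = (m : ℝ) ^ D * (D : ℝ) ^ D := by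
      rw [← mul_pow, ← mul_pow]
      congr 1
      field_simp
      try ring
    nlinarith [h, pow_pos (show (0:ℝ) < 2 by norm_num) D,
      pow_nonneg (show (0:ℝ) ≤ (m : ℝ) * D / 2 by positivity) D]
  have h2m : 2 * (m : ℝ) < 2 ^ D := by
    have h4 : (4 : ℝ) * m ≤ 2 ^ D := by
      have : ((4 * m : ℕ) : ℝ) ≤ ((2 ^ D : ℕ) : ℝ) := by exact_mod_cast h4m
      push_cast at this; linarith
    nlinarith [hm0]
  have final : 2 * (m : ℝ) * C < (m : ℝ) ^ D := by
    have hpos : (0:ℝ) < (D : ℝ) ^ D * 2 ^ D := by positivity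
    have hmD : (0:ℝ) < (m : ℝ) ^ D := by positivity
    have hDD : (0:ℝ) < (D : ℝ) ^ D := by positivity
    have h2D : (0:ℝ) < (2:ℝ) ^ D := by positivity
    -- (2m C) * (D^D 2^D) ≤ 2m * (m^D D^D) < 2^D * (m^D D^D)
    have step1 : (2 * (m : ℝ) * C) * ((D : ℝ) ^ D * 2 ^ D)
        ≤ 2 * (m : ℝ) * ((m : ℝ) ^ D * (D : ℝ) ^ D) := by nlinarith [key3, hm0]
    have step2 : 2 * (m : ℝ) * ((m : ℝ) ^ D * (D : ℝ) ^ D)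
        < (m : ℝ) ^ D * ((D : ℝ) ^ D * 2 ^ D) := by
      have hX : (0:ℝ) < (m : ℝ) ^ D * (D : ℝ) ^ D := by positivity
      nlinarith [mul_lt_mul_of_pos_right h2m hX]
    have := step1.trans_lt step2
    exact lt_of_mul_lt_mul_right this hpos.le
  rw [hCdef] at final
  exact_mod_cast final

private lemma aux_factB {m k s0 : ℕ} (hm : 1 ≤ m) (hs1 : 1 ≤ s0) (h2s : 2 * s0 ≤ m)
    (hbig : 3 * (m : ℝ) * m < (s0 : ℝ) * (2 * k * s0)) :
    2 * (2 ^ m * 2 ^ m) * (m - s0) ^ (2 * k * s0) < m ^ (2 * k * s0) := by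
  set E := 2 * k * s0 with hE
  have hm0 : (0:ℝ) < m := by exact_mod_cast hm
  have hsm : s0 ≤ m := by omega
  have hcast : ((m - s0 : ℕ) : ℝ) = (m : ℝ) - s0 := by
    push_cast [hsm]; ring
  have hs0m : (s0 : ℝ) ≤ m := by exact_mod_cast hsm
  have hs00 : (0:ℝ) ≤ s0 := Nat.cast_nonneg _
  -- key1 : (m - s0)^E ≤ m^E * exp(E * (-(s0/m)))
  have hfrac : (0:ℝ) ≤ 1 - (s0 : ℝ) / m := by
    rw [sub_nonneg, div_le_one hm0]; exact hs0m
  have hsplit : (m : ℝ) - s0 = (m : ℝ) * (1 - (s0 : ℝ) / m) := by field_simp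
  have hexp1 : 1 - (s0 : ℝ) / m ≤ Real.exp (-((s0 : ℝ) / m)) := by
    have := Real.add_one_le_exp (-((s0 : ℝ) / m)); linarith
  have key1 : ((m : ℝ) - s0) ^ E ≤ (m : ℝ) ^ E * Real.exp ((E : ℕ) * (-((s0 : ℝ) / m))) := by
    rw [hsplit, mul_pow, Real.exp_nat_mul]
    exact mul_le_mul_of_nonneg_left (pow_le_pow_left₀ hfrac hexp1 E) (by positivity)
  -- key2 : 2 * (2^m * 2^m) < exp(E * (s0/m))
  have hexp2 : (2:ℝ) ≤ Real.exp 1 := by have := Real.add_one_le_exp 1; linarith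
  have h8 : (8:ℝ) ≤ Real.exp 3 := by
    have h3 : Real.exp 3 = Real.exp 1 ^ 3 := by
      rw [← Real.exp_nat_mul]
      try norm_num
    rw [h3]
    calc (8:ℝ) = 2 ^ 3 := by norm_num
      _ ≤ Real.exp 1 ^ 3 := pow_le_pow_left₀ (by norm_num) hexp2 3
  have h2le : (2:ℝ) ≤ 2 ^ m := by
    calc (2:ℝ) = 2 ^ 1 := by norm_num
      _ ≤ 2 ^ m := pow_le_pow_right₀ (by norm_num) hm
  have key2 : 2 * ((2:ℝ) ^ m * 2 ^ m) < Real.exp ((E : ℕ) * ((s0 : ℝ) / m)) := by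
    have step1 : 2 * ((2:ℝ) ^ m * 2 ^ m) ≤ 8 ^ m := by
      have : (8:ℝ) ^ m = 2 ^ m * (2 ^ m * 2 ^ m) := by
        rw [show (8:ℝ) = 2 * (2 * 2) by norm_num, mul_pow, mul_pow]
      rw [this]
      have h2mnn : (0:ℝ) ≤ 2 ^ m * 2 ^ m := by positivity
      nlinarith [h2le, h2mnn]
    have step2 : (8:ℝ) ^ m ≤ Real.exp (3 * m) := by
      calc (8:ℝ) ^ m ≤ (Real.exp 3) ^ m := pow_le_pow_left₀ (by norm_num) h8 m
        _ = Real.exp ((m : ℕ) * 3) := (Real.exp_nat_mul 3 m).symm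
        _ = Real.exp (3 * m) := by ring_nf
    have step3 : Real.exp (3 * (m:ℝ)) < Real.exp ((E : ℕ) * ((s0 : ℝ) / m)) := by
      apply Real.exp_lt_exp.2
      rw [mul_div_assoc']
      rw [lt_div_iff₀ hm0]
      calc 3 * (m:ℝ) * m < (s0 : ℝ) * (2 * k * s0) := hbig
        _ = ((E : ℕ) : ℝ) * s0 := by rw [hE]; push_cast; ring
    linarith [step1.trans step2, step3]
  -- combine
  have hmain : 2 * ((2:ℝ) ^ m * 2 ^ m) * ((m : ℝ) - s0) ^ E < (m : ℝ) ^ E := by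
    have hnn : (0:ℝ) ≤ (m:ℝ) - s0 := by linarith
    have e1 : Real.exp ((E:ℕ) * ((s0:ℝ)/m)) * Real.exp ((E:ℕ) * (-((s0:ℝ)/m))) = 1 := by
      rw [← Real.exp_add]; ring_nf; exact Real.exp_zero
    calc 2 * ((2:ℝ) ^ m * 2 ^ m) * ((m : ℝ) - s0) ^ E
        ≤ 2 * ((2:ℝ) ^ m * 2 ^ m) * ((m : ℝ) ^ E * Real.exp ((E:ℕ) * (-((s0:ℝ)/m)))) :=
          mul_le_mul_of_nonneg_left key1 (by positivity)
      _ < Real.exp ((E:ℕ) * ((s0:ℝ)/m)) * ((m : ℝ) ^ E * Real.exp ((E:ℕ) * (-((s0:ℝ)/m)))) := by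
          apply mul_lt_mul_of_pos_right key2 (by positivity)
      _ = (m : ℝ) ^ E *
          (Real.exp ((E:ℕ) * ((s0:ℝ)/m)) * Real.exp ((E:ℕ) * (-((s0:ℝ)/m)))) := by ring
      _ = (m : ℝ) ^ E := by rw [e1, mul_one]
  have : ((2 * (2 ^ m * 2 ^ m) * (m - s0) ^ E : ℕ) : ℝ) < ((m ^ E : ℕ) : ℝ) := by
    push_cast [Nat.cast_sub hsm]
    exact hmain
  exact_mod_cast this

private lemma aux_count (m k D s0 : ℕ) (hm : 1 ≤ m) (hDmk : D ≤ m * k) (h2s : 2 * s0 ≤ m)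
    (hA : 2 * m * Nat.choose (m * k) D < m ^ D)
    (hB : 2 * (2 ^ m * 2 ^ m) * (m - s0) ^ (2 * k * s0) < m ^ (2 * k * s0)) :
    ∃ g : Fin m × Fin k → Fin m,
      (∀ v, (Finset.univ.filter (fun p => g p = v)).card < D) ∧
      (∀ A B : Finset (Fin m), Disjoint A B → A.card = s0 → B.card = s0 →
        ∃ p : Fin m × Fin k, (p.1 ∈ A ∧ g p ∈ B) ∨ (p.1 ∈ B ∧ g p ∈ A)) := by
  classical
  have h2ks : 2 * k * s0 ≤ m * k := by
    calc 2 * k * s0 = k * (2 * s0) := by ring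
      _ ≤ k * m := Nat.mul_le_mul_left k h2s
      _ = m * k := Nat.mul_comm k m
  have hcard_univ : (Finset.univ : Finset (Fin m × Fin k → Fin m)).card = m ^ (m * k) := by
    simp [Finset.card_univ]
  set BadDeg : Finset (Fin m × Fin k → Fin m) :=
    Finset.univ.filter (fun g => ∃ v, D ≤ (Finset.univ.filter (fun p => g p = v)).card)
    with hBadDeg
  set BadCut : Finset (Fin m × Fin k → Fin m) :=
    Finset.univ.filter (fun g => ∃ A B : Finset (Fin m), Disjoint A B ∧ A.card = s0 ∧
      B.card = s0 ∧ ∀ p : Fin m × Fin k, (p.1 ∈ A → g p ∉ B) ∧ (p.1 ∈ B → g p ∉ A))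
    with hBadCut
  -- bound on BadDeg
  have hpi1 : ∀ (v : Fin m) (T : Finset (Fin m × Fin k)), T.card = D →
      (Fintype.piFinset fun p => if p ∈ T then ({v} : Finset (Fin m)) else Finset.univ).card
        = m ^ (m * k - D) := by
    intro v T hT
    rw [Fintype.card_piFinset]
    have step : ∀ p : Fin m × Fin k,
        (if p ∈ T then ({v} : Finset (Fin m)) else Finset.univ).card
          = if p ∈ T then 1 else m := by
      intro p; split_ifs <;> simp
    rw [Finset.prod_congr rfl fun p _ => step p,
      Finset.prod_ite (fun _ => (1:ℕ)) (fun _ => m),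
      Finset.prod_const_one, Finset.prod_const, one_mul]
    congr 1
    have hmem : Finset.univ.filter (fun p : Fin m × Fin k => p ∈ T) = T := by
      ext p; simp
    have hadd := Finset.card_filter_add_card_filter_not
      (s := (Finset.univ : Finset (Fin m × Fin k))) (p := fun p => p ∈ T)
    rw [hmem, hT] at hadd
    have huniv : (Finset.univ : Finset (Fin m × Fin k)).card = m * k := by simp
    rw [huniv] at hadd
    exact Nat.eq_sub_of_add_eq' hadd
  have h1 : BadDeg.card ≤ m * (Nat.choose (m * k) D * m ^ (m * k - D)) := by
    have hsub1 : BadDeg ⊆ Finset.univ.biUnion (fun v : Fin m =>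
        (Finset.powersetCard D (Finset.univ : Finset (Fin m × Fin k))).biUnion (fun T =>
          Fintype.piFinset (fun p => if p ∈ T then ({v} : Finset (Fin m))
            else Finset.univ))) := by
      intro g hg
      rw [hBadDeg, Finset.mem_filter] at hg
      obtain ⟨-, v, hv⟩ := hg
      obtain ⟨T, hTsub, hTcard⟩ := Finset.exists_subset_card_eq hv
      refine Finset.mem_biUnion.2 ⟨v, Finset.mem_univ _, Finset.mem_biUnion.2 ⟨T, ?_, ?_⟩⟩
      · exact Finset.mem_powersetCard.2 ⟨Finset.subset_univ _, hTcard⟩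
      · rw [Fintype.mem_piFinset]
        intro p
        split_ifs with h
        · have := hTsub h
          rw [Finset.mem_filter] at this
          simp [this.2]
        · exact Finset.mem_univ _
    calc BadDeg.card
        ≤ _ := Finset.card_le_card hsub1
      _ ≤ ∑ v : Fin m, ((Finset.powersetCard D (Finset.univ : Finset (Fin m × Fin k))).biUnion
            (fun T => Fintype.piFinset (fun p => if p ∈ T then ({v} : Finset (Fin m))
              else Finset.univ))).card := Finset.card_biUnion_le
      _ ≤ ∑ _v : Fin m, (Nat.choose (m * k) D * m ^ (m * k - D)) := by
          apply Finset.sum_le_sum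
          intro v _
          calc ((Finset.powersetCard D (Finset.univ : Finset (Fin m × Fin k))).biUnion
                (fun T => Fintype.piFinset (fun p => if p ∈ T then ({v} : Finset (Fin m))
                  else Finset.univ))).card
              ≤ ∑ T ∈ Finset.powersetCard D (Finset.univ : Finset (Fin m × Fin k)),
                  (Fintype.piFinset (fun p => if p ∈ T then ({v} : Finset (Fin m))
                    else Finset.univ)).card := Finset.card_biUnion_le
            _ = ∑ T ∈ Finset.powersetCard D (Finset.univ : Finset (Fin m × Fin k)),
                  m ^ (m * k - D) := by
                apply Finset.sum_congr rfl
                intro T hT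
                exact hpi1 v T (Finset.mem_powersetCard.1 hT).2
            _ = Nat.choose (m * k) D * m ^ (m * k - D) := by
                rw [Finset.sum_const, Finset.card_powersetCard, smul_eq_mul]
                congr 2
                simp
      _ = m * (Nat.choose (m * k) D * m ^ (m * k - D)) := by
          rw [Finset.sum_const, Finset.card_univ, Fintype.card_fin, smul_eq_mul]
  -- bound on BadCut
  have hexpo : m * k - 2 * k * s0 = k * (m - 2 * s0) := by
    have heq : m * k = 2 * k * s0 + k * (m - 2 * s0) := by
      have hm2 : m = 2 * s0 + (m - 2 * s0) := by omega
      calc m * k = (2 * s0 + (m - 2 * s0)) * k := by rw [← hm2]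
        _ = 2 * k * s0 + k * (m - 2 * s0) := by ring
    rw [heq, Nat.add_sub_cancel_left]
  have hpi2 : ∀ A B : Finset (Fin m), Disjoint A B → A.card = s0 → B.card = s0 →
      (Fintype.piFinset fun p : Fin m × Fin k =>
          if p.1 ∈ A then Bᶜ else if p.1 ∈ B then Aᶜ else Finset.univ).card
        = (m - s0) ^ (2 * k * s0) * m ^ (m * k - 2 * k * s0) := by
    intro A B hAB hAc hBc
    rw [Fintype.card_piFinset, Fintype.prod_prod_type]
    have inner : ∀ a : Fin m,
        (∏ _b : Fin k, (if a ∈ A then Bᶜ else if a ∈ B then Aᶜ else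
          (Finset.univ : Finset (Fin m))).card)
        = (if a ∈ A ∪ B then (m - s0) else m) ^ k := by
      intro a
      rw [Finset.prod_const, Finset.card_univ, Fintype.card_fin]
      congr 1
      by_cases h1 : a ∈ A <;> by_cases h2 : a ∈ B <;>
        simp [h1, h2, Finset.card_compl, hAc, hBc]
    rw [Finset.prod_congr rfl fun a _ => inner a]
    have step : ∀ a : Fin m, (if a ∈ A ∪ B then (m - s0) else m) ^ k
        = if a ∈ A ∪ B then (m - s0) ^ k else m ^ k := by
      intro a; split_ifs <;> rfl
    rw [Finset.prod_congr rfl fun a _ => step a,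
      Finset.prod_ite (fun _ => (m - s0) ^ k) (fun _ => m ^ k),
      Finset.prod_const, Finset.prod_const]
    have hmem : Finset.univ.filter (fun a : Fin m => a ∈ A ∪ B) = A ∪ B := by
      ext a; simp
    have hunion : (A ∪ B).card = 2 * s0 := by
      rw [Finset.card_union_of_disjoint hAB, hAc, hBc]; ring
    have hadd := Finset.card_filter_add_card_filter_not
      (s := (Finset.univ : Finset (Fin m))) (p := fun a => a ∈ A ∪ B)
    rw [hmem, hunion, Finset.card_univ, Fintype.card_fin] at hadd
    have hneg : (Finset.univ.filter (fun a : Fin m => ¬ a ∈ A ∪ B)).card = m - 2 * s0 :=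
      Nat.eq_sub_of_add_eq' hadd
    rw [hmem, hunion, hneg, ← pow_mul, ← pow_mul, hexpo]
    congr 2
    ring
  have h2 : BadCut.card ≤ (2 ^ m * 2 ^ m) *
      ((m - s0) ^ (2 * k * s0) * m ^ (m * k - 2 * k * s0)) := by
    set Q : Finset (Finset (Fin m) × Finset (Fin m)) :=
      ((Finset.powersetCard s0 (Finset.univ : Finset (Fin m))) ×ˢ
        (Finset.powersetCard s0 (Finset.univ : Finset (Fin m)))).filter
        (fun AB => Disjoint AB.1 AB.2) with hQ
    have hsub2 : BadCut ⊆ Q.biUnion (fun AB =>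
        Fintype.piFinset (fun p : Fin m × Fin k =>
          if p.1 ∈ AB.1 then AB.2ᶜ else if p.1 ∈ AB.2 then AB.1ᶜ else Finset.univ)) := by
      intro g hg
      rw [hBadCut, Finset.mem_filter] at hg
      obtain ⟨-, A, B, hAB, hAc, hBc, hprop⟩ := hg
      refine Finset.mem_biUnion.2 ⟨(A, B), ?_, ?_⟩
      · rw [hQ, Finset.mem_filter, Finset.mem_product]
        exact ⟨⟨Finset.mem_powersetCard.2 ⟨Finset.subset_univ _, hAc⟩,
          Finset.mem_powersetCard.2 ⟨Finset.subset_univ _, hBc⟩⟩, hAB⟩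
      · rw [Fintype.mem_piFinset]
        intro p
        by_cases h1 : p.1 ∈ A
        · simp only [h1, if_true]
          exact Finset.mem_compl.2 ((hprop p).1 h1)
        · by_cases h2 : p.1 ∈ B
          · simp only [h1, if_false, h2, if_true]
            exact Finset.mem_compl.2 ((hprop p).2 h2)
          · simp [h1, h2]
    have hQcard : Q.card ≤ 2 ^ m * 2 ^ m := by
      calc Q.card ≤ ((Finset.powersetCard s0 (Finset.univ : Finset (Fin m))) ×ˢ
            (Finset.powersetCard s0 (Finset.univ : Finset (Fin m)))).card :=
            Finset.card_filter_le _ _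
        _ = (Finset.powersetCard s0 (Finset.univ : Finset (Fin m))).card *
            (Finset.powersetCard s0 (Finset.univ : Finset (Fin m))).card :=
            Finset.card_product _ _
        _ ≤ 2 ^ m * 2 ^ m := by
            have := aux_choose_le_two_pow m s0
            rw [Finset.card_powersetCard, Finset.card_univ, Fintype.card_fin]
            exact Nat.mul_le_mul this this
    calc BadCut.card ≤ _ := Finset.card_le_card hsub2
      _ ≤ ∑ AB ∈ Q, (Fintype.piFinset (fun p : Fin m × Fin k =>
            if p.1 ∈ AB.1 then AB.2ᶜ else if p.1 ∈ AB.2 then AB.1ᶜ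
            else Finset.univ)).card := Finset.card_biUnion_le
      _ = ∑ _AB ∈ Q, ((m - s0) ^ (2 * k * s0) * m ^ (m * k - 2 * k * s0)) := by
          apply Finset.sum_congr rfl
          intro AB hAB
          rw [hQ, Finset.mem_filter, Finset.mem_product] at hAB
          exact hpi2 AB.1 AB.2 hAB.2 (Finset.mem_powersetCard.1 hAB.1.1).2
            (Finset.mem_powersetCard.1 hAB.1.2).2
      _ = Q.card * ((m - s0) ^ (2 * k * s0) * m ^ (m * k - 2 * k * s0)) := by
          rw [Finset.sum_const, smul_eq_mul]
      _ ≤ (2 ^ m * 2 ^ m) * ((m - s0) ^ (2 * k * s0) * m ^ (m * k - 2 * k * s0)) :=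
          Nat.mul_le_mul_right _ hQcard
  -- conclude
  have hlt : (BadDeg ∪ BadCut).card
      < (Finset.univ : Finset (Fin m × Fin k → Fin m)).card := by
    rw [hcard_univ]
    have p1 : 2 * (m * (Nat.choose (m * k) D * m ^ (m * k - D))) < m ^ (m * k) := by
      have e1 : m ^ (m * k) = m ^ D * m ^ (m * k - D) := by
        rw [← pow_add, Nat.add_sub_cancel' hDmk]
      rw [e1]
      calc 2 * (m * (Nat.choose (m * k) D * m ^ (m * k - D)))
          = (2 * m * Nat.choose (m * k) D) * m ^ (m * k - D) := by ring
        _ < m ^ D * m ^ (m * k - D) :=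
            mul_lt_mul_of_pos_right hA (pow_pos (by omega) _)
    have p2 : 2 * ((2 ^ m * 2 ^ m) *
        ((m - s0) ^ (2 * k * s0) * m ^ (m * k - 2 * k * s0))) < m ^ (m * k) := by
      have e2 : m ^ (m * k) = m ^ (2 * k * s0) * m ^ (m * k - 2 * k * s0) := by
        rw [← pow_add, Nat.add_sub_cancel' h2ks]
      rw [e2]
      calc 2 * ((2 ^ m * 2 ^ m) * ((m - s0) ^ (2 * k * s0) * m ^ (m * k - 2 * k * s0)))
          = (2 * (2 ^ m * 2 ^ m) * (m - s0) ^ (2 * k * s0)) * m ^ (m * k - 2 * k * s0) := by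
            ring
        _ < m ^ (2 * k * s0) * m ^ (m * k - 2 * k * s0) :=
            mul_lt_mul_of_pos_right hB (pow_pos (by omega) _)
    have hc := Finset.card_union_le BadDeg BadCut
    linarith [hc, h1, h2, p1, p2]
  obtain ⟨g, hg⟩ : ∃ g, g ∉ BadDeg ∪ BadCut := by
    by_contra hcon
    push_neg at hcon
    have hsub : (Finset.univ : Finset (Fin m × Fin k → Fin m)) ⊆ BadDeg ∪ BadCut :=
      fun g _ => hcon g
    exact absurd (Finset.card_le_card hsub) (not_le.2 hlt)
  rw [Finset.mem_union] at hg
  push_neg at hg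
  obtain ⟨hg1, hg2⟩ := hg
  rw [hBadDeg, Finset.mem_filter] at hg1
  push_neg at hg1
  rw [hBadCut, Finset.mem_filter] at hg2
  push_neg at hg2
  refine ⟨g, ?_, ?_⟩
  · intro v
    exact hg1 (Finset.mem_univ g) v
  · intro A B hAB hAc hBc
    have := hg2 (Finset.mem_univ g) A B hAB hAc hBc
    obtain ⟨p, hp⟩ := this
    refine ⟨p, ?_⟩
    by_cases hx : p.1 ∈ A ∧ g p ∈ B
    · exact Or.inl hx
    · refine Or.inr (hp ?_)
      intro ha hb
      exact hx ⟨ha, hb⟩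

end Statement13Aux

set_option maxHeartbeats 2000000 in
/-- for all sufficiently large `m` there is a graph on `m` vertices of
maximum degree at most `m^(1/4.9)` in which any two disjoint vertex subsets of size at
least `m^0.999/2` are joined by an edge. -/
theorem statement_13 :
    ∃ c : ℕ, ∀ m : ℕ, c < m →
      ∃ G : SimpleGraph (Fin m),
        (∀ v : Fin m, ({w | G.Adj v w}.ncard : ℝ) ≤ (m : ℝ) ^ ((1 : ℝ) / 4.9)) ∧
        ∀ U₁ U₂ : Finset (Fin m), Disjoint U₁ U₂ →
          (m : ℝ) ^ (0.999 : ℝ) / 2 ≤ U₁.card → (m : ℝ) ^ (0.999 : ℝ) / 2 ≤ U₂.card →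
          ∃ u ∈ U₁, ∃ v ∈ U₂, G.Adj u v := by
  have T : ∀ ε C : ℝ, 0 < ε → ∀ᶠ m : ℕ in Filter.atTop, C ≤ (m : ℝ) ^ ε := by
    intro ε C hε
    exact ((tendsto_rpow_atTop hε).comp
      tendsto_natCast_atTop_atTop).eventually_ge_atTop C
  have key : ∀ᶠ m : ℕ in Filter.atTop,
      ∃ G : SimpleGraph (Fin m),
        (∀ v : Fin m, ({w | G.Adj v w}.ncard : ℝ) ≤ (m : ℝ) ^ ((1 : ℝ) / 4.9)) ∧
        ∀ U₁ U₂ : Finset (Fin m), Disjoint U₁ U₂ →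
          (m : ℝ) ^ (0.999 : ℝ) / 2 ≤ U₁.card → (m : ℝ) ^ (0.999 : ℝ) / 2 ≤ U₂.card →
          ∃ u ∈ U₁, ∃ v ∈ U₂, G.Adj u v := by
    filter_upwards [Filter.eventually_ge_atTop 2,
      T 0.002 12 (by norm_num), T 0.212 184320 (by norm_num),
      T 0.198 7 (by norm_num), T 0.001 2 (by norm_num),
      T 0.999 2 (by norm_num), T 0.798 2 (by norm_num),
      T ((1:ℝ)/4.9 - 0.202) 4 (by norm_num)]
      with m h2m hx2 hx3 hx4 hx5 hx6 hx7 hx8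
    have hm1n : 1 ≤ m := by omega
    have hm1 : (1:ℝ) ≤ (m:ℝ) := by exact_mod_cast hm1n
    have hm0 : (0:ℝ) < m := by linarith
    have hmnn : (0:ℝ) ≤ (m:ℝ) := hm0.le
    have hone : ∀ ε : ℝ, 0 ≤ ε → (1:ℝ) ≤ (m:ℝ) ^ ε := by
      intro ε hε
      have h := Real.rpow_le_rpow_of_exponent_le hm1 hε
      rwa [Real.rpow_zero] at h
    obtain ⟨k, hkdef⟩ : ∃ k : ℕ, k = ⌈(m:ℝ) ^ (0.2:ℝ)⌉₊ := ⟨_, rfl⟩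
    obtain ⟨D, hDdef⟩ : ∃ D : ℕ, D = ⌈(m:ℝ) ^ (0.202:ℝ)⌉₊ := ⟨_, rfl⟩
    obtain ⟨s0, hsdef⟩ : ∃ s0 : ℕ, s0 = ⌈(m:ℝ) ^ (0.999:ℝ) / 2⌉₊ := ⟨_, rfl⟩
    have hk_lb : (m:ℝ) ^ (0.2:ℝ) ≤ (k:ℝ) := by rw [hkdef]; exact Nat.le_ceil _
    have hk_ub : (k:ℝ) ≤ (m:ℝ) ^ (0.2:ℝ) + 1 := by
      rw [hkdef]; exact (Nat.ceil_lt_add_one (by positivity)).le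
    have hD_lb : (m:ℝ) ^ (0.202:ℝ) ≤ (D:ℝ) := by rw [hDdef]; exact Nat.le_ceil _
    have hD_ub : (D:ℝ) ≤ (m:ℝ) ^ (0.202:ℝ) + 1 := by
      rw [hDdef]; exact (Nat.ceil_lt_add_one (by positivity)).le
    have hs_lb : (m:ℝ) ^ (0.999:ℝ) / 2 ≤ (s0:ℝ) := by rw [hsdef]; exact Nat.le_ceil _
    have hs_ub : (s0:ℝ) ≤ (m:ℝ) ^ (0.999:ℝ) / 2 + 1 := by
      rw [hsdef]; exact (Nat.ceil_lt_add_one (by positivity)).le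
    have hk1 : 1 ≤ k := by
      have h : (1:ℝ) ≤ (k:ℝ) := le_trans (hone 0.2 (by norm_num)) hk_lb
      exact_mod_cast h
    have hD1 : 1 ≤ D := by
      have h : (1:ℝ) ≤ (D:ℝ) := le_trans (hone 0.202 (by norm_num)) hD_lb
      exact_mod_cast h
    have hs1 : 1 ≤ s0 := by
      have hpos : (0:ℝ) < (m:ℝ)^(0.999:ℝ)/2 := by positivity
      rw [hsdef]
      exact Nat.ceil_pos.mpr hpos
    have h6k : 6 * k ≤ D := by
      have h1 : (1:ℝ) ≤ (m:ℝ)^(0.2:ℝ) := hone 0.2 (by norm_num)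
      have hcalc : 6 * (k:ℝ) ≤ (D:ℝ) := by
        calc 6 * (k:ℝ) ≤ 6 * ((m:ℝ)^(0.2:ℝ) + 1) := by linarith
          _ ≤ 12 * (m:ℝ)^(0.2:ℝ) := by linarith
          _ ≤ (m:ℝ)^(0.002:ℝ) * (m:ℝ)^(0.2:ℝ) :=
              mul_le_mul_of_nonneg_right hx2 (by positivity)
          _ = (m:ℝ)^(0.202:ℝ) := by
              rw [← Real.rpow_add hm0]; norm_num
          _ ≤ (D:ℝ) := hD_lb
      exact_mod_cast hcalc
    have h4m : 4 * m ≤ 2 ^ D := by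
      have hlog2 : (1/2:ℝ) ≤ Real.log 2 := by
        have := Real.log_two_gt_d9; linarith
      have hDnn : (0:ℝ) ≤ (D:ℝ) := Nat.cast_nonneg _
      have e6 : ((D:ℝ) * Real.log 2) ^ 6 ≤ 720 * Real.exp ((D:ℝ) * Real.log 2) := by
        have h := aux_pow_le_factorial_mul_exp ((D:ℝ) * Real.log 2)
          (mul_nonneg hDnn (by linarith)) 6
        have h720 : ((Nat.factorial 6 : ℕ) : ℝ) = 720 := by norm_num [Nat.factorial]
        rw [h720] at h
        exact h
      have eexp : Real.exp ((D:ℝ) * Real.log 2) = 2 ^ D := by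
        rw [Real.exp_nat_mul, Real.exp_log (by norm_num : (0:ℝ) < 2)]
      have hD2 : (D:ℝ)/2 ≤ (D:ℝ) * Real.log 2 := by nlinarith [hDnn, hlog2]
      have h6pow : ((D:ℝ)/2)^6 ≤ ((D:ℝ) * Real.log 2)^6 :=
        pow_le_pow_left₀ (by positivity) hD2 6
      have hmid : ((D:ℝ))^6 ≤ 46080 * 2 ^ D := by
        rw [eexp] at e6
        linarith [h6pow, e6]
      have hrp : ((m:ℝ)^(0.202:ℝ))^(6:ℕ) = (m:ℝ) * (m:ℝ)^(0.212:ℝ) := by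
        rw [← Real.rpow_natCast ((m:ℝ)^(0.202:ℝ)) 6, ← Real.rpow_mul hmnn]
        rw [show ((0.202:ℝ) * ((6:ℕ):ℝ)) = 1 + 0.212 by norm_num]
        rw [Real.rpow_add hm0, Real.rpow_one]
      have hD6 : (m:ℝ) * (m:ℝ)^(0.212:ℝ) ≤ (D:ℝ)^6 := by
        rw [← hrp]
        exact pow_le_pow_left₀ (by positivity) hD_lb 6
      have hfin : 4*(m:ℝ) ≤ (2:ℝ)^D := by
        have h1 : 184320 * (m:ℝ) ≤ (m:ℝ) * (m:ℝ)^(0.212:ℝ) := by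
          nlinarith [hx3, hm0]
        linarith [hD6, hmid, h1]
      have hcast : ((4*m:ℕ):ℝ) ≤ ((2^D:ℕ):ℝ) := by push_cast; linarith
      exact_mod_cast hcast
    have h2s : 2 * s0 ≤ m := by
      have hcalc : 2*(s0:ℝ) ≤ (m:ℝ) := by
        calc 2*(s0:ℝ) ≤ 2*((m:ℝ)^(0.999:ℝ)/2 + 1) := by linarith
          _ = (m:ℝ)^(0.999:ℝ) + 2 := by ring
          _ ≤ 2 * (m:ℝ)^(0.999:ℝ) := by linarith [hx6]
          _ ≤ (m:ℝ)^(0.001:ℝ) * (m:ℝ)^(0.999:ℝ) :=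
              mul_le_mul_of_nonneg_right hx5 (by positivity)
          _ = (m:ℝ) := by rw [← Real.rpow_add hm0]; norm_num
      exact_mod_cast hcalc
    have hDmk : D ≤ m * k := by
      have hDm : D ≤ m := by
        have h1 : (1:ℝ) ≤ (m:ℝ)^(0.202:ℝ) := hone 0.202 (by norm_num)
        have hcalc : (D:ℝ) ≤ (m:ℝ) := by
          calc (D:ℝ) ≤ (m:ℝ)^(0.202:ℝ) + 1 := hD_ub
            _ ≤ 2*(m:ℝ)^(0.202:ℝ) := by linarith
            _ ≤ (m:ℝ)^(0.798:ℝ) * (m:ℝ)^(0.202:ℝ) :=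
                mul_le_mul_of_nonneg_right hx7 (by positivity)
            _ = (m:ℝ) := by rw [← Real.rpow_add hm0]; norm_num
        exact_mod_cast hcalc
      calc D ≤ m := hDm
        _ ≤ m * k := Nat.le_mul_of_pos_right m (by omega)
    have hbig : 3 * (m:ℝ) * m < (s0:ℝ) * (2 * k * s0) := by
      have ha : (0:ℝ) ≤ (m:ℝ)^(0.999:ℝ)/2 := by positivity
      have hk0 : (0:ℝ) ≤ (k:ℝ) := Nat.cast_nonneg _
      have hs00 : (0:ℝ) ≤ (s0:ℝ) := Nat.cast_nonneg _
      have h1 : (m:ℝ)^(0.999:ℝ)/2 * (2 * ((m:ℝ)^(0.2:ℝ)) * ((m:ℝ)^(0.999:ℝ)/2))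
          ≤ (s0:ℝ) * (2 * (k:ℝ) * (s0:ℝ)) := by
        have step0 : (m:ℝ)^(0.2:ℝ) * ((m:ℝ)^(0.999:ℝ)/2) ≤ (k:ℝ) * (s0:ℝ) :=
          mul_le_mul hk_lb hs_lb ha hk0
        have step1 : 2 * ((m:ℝ)^(0.2:ℝ)) * ((m:ℝ)^(0.999:ℝ)/2) ≤ 2 * (k:ℝ) * (s0:ℝ) := by
          linarith [step0]
        exact mul_le_mul hs_lb step1 (by positivity) hs00
      have e : (m:ℝ)^(0.999:ℝ)/2 * (2 * ((m:ℝ)^(0.2:ℝ)) * ((m:ℝ)^(0.999:ℝ)/2))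
          = ((m:ℝ)^(2:ℝ) * (m:ℝ)^(0.198:ℝ))/2 := by
        have e1 : (m:ℝ)^(0.999:ℝ) * ((m:ℝ)^(0.2:ℝ) * (m:ℝ)^(0.999:ℝ))
            = (m:ℝ)^(2:ℝ) * (m:ℝ)^(0.198:ℝ) := by
          rw [← Real.rpow_add hm0, ← Real.rpow_add hm0, ← Real.rpow_add hm0]
          norm_num
        calc (m:ℝ)^(0.999:ℝ)/2 * (2 * ((m:ℝ)^(0.2:ℝ)) * ((m:ℝ)^(0.999:ℝ)/2))
            = ((m:ℝ)^(0.999:ℝ) * ((m:ℝ)^(0.2:ℝ) * (m:ℝ)^(0.999:ℝ)))/2 := by ring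
          _ = ((m:ℝ)^(2:ℝ) * (m:ℝ)^(0.198:ℝ))/2 := by rw [e1]
      have h3 : 3*(m:ℝ)*m < ((m:ℝ)^(2:ℝ) * (m:ℝ)^(0.198:ℝ))/2 := by
        have e3 : (m:ℝ)^(2:ℝ) = (m:ℝ)*(m:ℝ) := by
          rw [show (2:ℝ) = ((2:ℕ):ℝ) by norm_num, Real.rpow_natCast]
          ring
        rw [e3]
        have hmm : (0:ℝ) ≤ (m:ℝ)*(m:ℝ) := by positivity
        nlinarith [mul_le_mul_of_nonneg_left hx4 hmm, hm0]
      calc 3*(m:ℝ)*m < ((m:ℝ)^(2:ℝ) * (m:ℝ)^(0.198:ℝ))/2 := h3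
        _ = (m:ℝ)^(0.999:ℝ)/2 * (2 * ((m:ℝ)^(0.2:ℝ)) * ((m:ℝ)^(0.999:ℝ)/2)) := e.symm
        _ ≤ (s0:ℝ) * (2 * (k:ℝ) * (s0:ℝ)) := h1
    have hkD : (k:ℝ) + (D:ℝ) ≤ (m:ℝ)^((1:ℝ)/4.9) := by
      have h1 : (1:ℝ) ≤ (m:ℝ)^(0.202:ℝ) := hone 0.202 (by norm_num)
      have h2 : (m:ℝ)^(0.2:ℝ) ≤ (m:ℝ)^(0.202:ℝ) :=
        Real.rpow_le_rpow_of_exponent_le hm1 (by norm_num)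
      calc (k:ℝ) + (D:ℝ) ≤ ((m:ℝ)^(0.2:ℝ)+1) + ((m:ℝ)^(0.202:ℝ)+1) := by linarith
        _ ≤ 4*(m:ℝ)^(0.202:ℝ) := by linarith
        _ ≤ (m:ℝ)^((1:ℝ)/4.9-0.202) * (m:ℝ)^(0.202:ℝ) :=
            mul_le_mul_of_nonneg_right hx8 (by positivity)
        _ = (m:ℝ)^((1:ℝ)/4.9) := by
            rw [← Real.rpow_add hm0]
            congr 1
            ring
    have hA := aux_factA hm1n hk1 h6k h4m
    have hB := aux_factB hm1n hs1 h2s hbig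
    obtain ⟨g, hdeg, hcut⟩ := aux_count m k D s0 hm1n hDmk h2s hA hB
    refine ⟨⟨fun u v => u ≠ v ∧ ((∃ i, g (u, i) = v) ∨ (∃ i, g (v, i) = u)),
      ?_, ?_⟩, ?_, ?_⟩
    · constructor; intro u v h
      exact ⟨h.1.symm, h.2.symm⟩
    · constructor; intro v h
      exact h.1 rfl
    · intro v
      classical
      set N : Finset (Fin m) := (Finset.univ.image fun i : Fin k => g (v, i)) ∪
        (Finset.univ.filter fun u => ∃ i, g (u, i) = v) with hN
      have hsub : {w | w ≠ v ∧ ((∃ i, g (v, i) = w) ∨ (∃ i, g (w, i) = v))}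
          ⊆ (N : Set (Fin m)) := by
        intro w hw
        obtain ⟨hne, hc⟩ := hw
        rcases hc with ⟨i, hi⟩ | ⟨i, hi⟩
        · simp only [hN, Finset.coe_union, Set.mem_union, Finset.coe_image,
            Set.mem_image, Finset.coe_filter, Set.mem_setOf_eq]
          exact Or.inl ⟨i, by simp, hi⟩
        · simp only [hN, Finset.coe_union, Set.mem_union, Finset.coe_image,
            Set.mem_image, Finset.coe_filter, Set.mem_setOf_eq]
          exact Or.inr ⟨Finset.mem_univ w, i, hi⟩
      have hsub' : {w | v ≠ w ∧ ((∃ i, g (v, i) = w) ∨ (∃ i, g (w, i) = v))}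
          ⊆ (N : Set (Fin m)) := by
        intro w hw
        exact hsub ⟨hw.1.symm, hw.2⟩
      have h1 : ({w | v ≠ w ∧ ((∃ i, g (v, i) = w) ∨ (∃ i, g (w, i) = v))}).ncard
          ≤ N.card := by
        rw [← Set.ncard_coe_finset N]
        exact Set.ncard_le_ncard hsub' (Finset.finite_toSet N)
      have h2 : N.card ≤ k + D := by
        refine le_trans (Finset.card_union_le _ _) ?_
        have hcardA : (Finset.univ.image fun i : Fin k => g (v, i)).card ≤ k := by
          refine le_trans Finset.card_image_le ?_
          simp
        have hbsub : (Finset.univ.filter fun u => ∃ i, g (u, i) = v) ⊆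
            (Finset.univ.filter fun p : Fin m × Fin k => g p = v).image Prod.fst := by
          intro u hu
          rw [Finset.mem_filter] at hu
          obtain ⟨-, i, hi⟩ := hu
          exact Finset.mem_image.2 ⟨(u, i), by simp [hi], rfl⟩
        have hcardB : (Finset.univ.filter fun u => ∃ i, g (u, i) = v).card ≤ D := by
          calc (Finset.univ.filter fun u => ∃ i, g (u, i) = v).card
              ≤ ((Finset.univ.filter fun p : Fin m × Fin k => g p = v).image
                  Prod.fst).card := Finset.card_le_card hbsub
            _ ≤ (Finset.univ.filter fun p : Fin m × Fin k => g p = v).card :=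
                Finset.card_image_le
            _ ≤ D := (hdeg v).le
        omega
      calc (({w | v ≠ w ∧ ((∃ i, g (v, i) = w) ∨ (∃ i, g (w, i) = v))}).ncard : ℝ)
          ≤ (N.card : ℝ) := by exact_mod_cast h1
        _ ≤ (k:ℝ) + (D:ℝ) := by exact_mod_cast h2
        _ ≤ (m:ℝ)^((1:ℝ)/4.9) := hkD
    · intro U₁ U₂ hdisj hU1 hU2
      have hs0U1 : s0 ≤ U₁.card := by rw [hsdef]; exact Nat.ceil_le.2 hU1
      have hs0U2 : s0 ≤ U₂.card := by rw [hsdef]; exact Nat.ceil_le.2 hU2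
      obtain ⟨A, hAsub, hAcard⟩ := Finset.exists_subset_card_eq hs0U1
      obtain ⟨B, hBsub, hBcard⟩ := Finset.exists_subset_card_eq hs0U2
      have hAB : Disjoint A B := hdisj.mono hAsub hBsub
      obtain ⟨p, hp⟩ := hcut A B hAB hAcard hBcard
      rcases hp with ⟨h1, h2⟩ | ⟨h1, h2⟩
      · refine ⟨p.1, hAsub h1, g p, hBsub h2, ?_, Or.inl ⟨p.2, ?_⟩⟩
        · intro he
          exact Finset.disjoint_left.1 hAB (he ▸ h1) h2
        · show g (p.1, p.2) = g p
          rw [Prod.mk.eta]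
      · refine ⟨g p, hAsub h2, p.1, hBsub h1, ?_, Or.inr ⟨p.2, ?_⟩⟩
        · intro he
          exact Finset.disjoint_left.1 hAB h2 (he ▸ h1)
        · show g (p.1, p.2) = g p
          rw [Prod.mk.eta]
  rw [Filter.eventually_atTop] at key
  obtain ⟨c, hc⟩ := key
  exact ⟨c, fun m hm => hc m hm.le⟩

end NBPPaper
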